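/- A curve rational in polar coordinates cannot have a limit point different from the origin: let a < b ≤ +∞ with the interval (a,b) contained in Ω, and suppose that as t → b⁻ the function θ(t) tends to +∞ or to −∞, while P(t) = (r(t)·cos(θ(t)), r(t)·sin(θ(t))) converges to a point Q ∈ ℝ². Then Q = (0,0). -/

import Mathlib

open Filter

/-- The rational function defined by a pair of polynomials, e.g. r(t) = A(t)/B(t). -/
noncomputable def ratFun (A B : Polynomial ℝ) (t : ℝ) : ℝ :=
  A.eval t / B.eval t

/-- The curve in Cartesian coordinates: P(t) = (r(t)·cos(θ(t)), r(t)·sin(θ(t))). -/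
noncomputable def polarCurve (A B C D : Polynomial ℝ) (t : ℝ) : ℝ × ℝ :=
  (ratFun A B t * Real.cos (ratFun C D t), ratFun A B t * Real.sin (ratFun C D t))

/-- The filter of real numbers tending to b from the left, where b ∈ ℝ ∪ {±∞} is
modelled as an extended real; for b = ⊤ this is `atTop`. -/
noncomputable def leftLimitFilter (b : EReal) : Filter ℝ :=
  Filter.comap (fun x : ℝ => (x : EReal)) (nhdsWithin b (Set.Iio b))

/-- A basis for the left-limit filter consisting of intervals contained in `(a, b)`. -/
lemma llf_basis {a : ℝ} {b : EReal} (hab : (a : EReal) < b) :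
    (leftLimitFilter b).HasBasis (fun c : ℝ => a < c ∧ (c : EReal) < b)
      (fun c => {t : ℝ | c < t ∧ (t : EReal) < b}) := by
  have h1 : (nhdsWithin b (Set.Iio b)).HasBasis (· < b) (Set.Ioo · b) :=
    nhdsLT_basis_of_exists_lt ⟨(a : EReal), hab⟩
  have h2 := h1.comap (fun x : ℝ => (x : EReal))
  refine h2.to_hasBasis ?_ ?_
  · intro c hc
    have hm : max c (a : EReal) < b := max_lt hc hab
    obtain ⟨c', hc1, hc2⟩ := EReal.exists_between_coe_real hm
    refine ⟨c', ⟨?_, hc2⟩, ?_⟩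
    · exact_mod_cast lt_of_le_of_lt (le_max_right _ _) hc1
    · intro t ht
      have h3 : c < (c' : EReal) := lt_of_le_of_lt (le_max_left _ _) hc1
      have h4 : (c' : EReal) < (t : EReal) := by exact_mod_cast ht.1
      exact ⟨lt_trans h3 h4, ht.2⟩
  · intro c' hc'
    refine ⟨(c' : EReal), hc'.2, ?_⟩
    intro t ht
    exact ⟨EReal.coe_lt_coe_iff.mp ht.1, ht.2⟩

lemma llf_neBot {a : ℝ} {b : EReal} (hab : (a : EReal) < b) : (leftLimitFilter b).NeBot := by
  rw [(llf_basis hab).neBot_iff]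
  intro c hc
  obtain ⟨t, ht1, ht2⟩ := EReal.exists_between_coe_real hc.2
  exact ⟨t, by exact_mod_cast ht1, ht2⟩

/-- Along a filter with a basis of preconnected sets on which `θ` is continuous,
if `θ → ±∞` then `g ∘ θ` frequently vanishes, provided `g` has arbitrarily large
and arbitrarily small zeros. -/
lemma freq_zero {ι : Sort*} {l : Filter ℝ} [l.NeBot] {p : ι → Prop} {S : ι → Set ℝ}
    (hl : l.HasBasis p S)
    (hconn : ∀ i, p i → IsPreconnected (S i))
    {θ : ℝ → ℝ} (hθc : ∀ i, p i → ContinuousOn θ (S i))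
    (hθ : Tendsto θ l atTop ∨ Tendsto θ l atBot)
    (g : ℝ → ℝ) (hg1 : ∀ v : ℝ, ∃ x, v ≤ x ∧ g x = 0)
    (hg2 : ∀ v : ℝ, ∃ x, x ≤ v ∧ g x = 0) :
    ∃ᶠ t in l, g (θ t) = 0 := by
  rw [hl.frequently_iff]
  intro i hi
  have hS : S i ∈ l := hl.mem_of_mem hi
  have himg : (θ '' S i).OrdConnected :=
    ((hconn i hi).image θ (hθc i hi)).ordConnected
  obtain ⟨t₁, ht₁⟩ := Filter.nonempty_of_mem hS
  rcases hθ with h | h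
  · obtain ⟨z, hz1, hz2⟩ := hg1 (θ t₁)
    obtain ⟨t₂, ht₂z, ht₂S⟩ :=
      ((h.eventually_ge_atTop z).and (eventually_of_mem hS fun t ht => ht)).exists
    have hz : z ∈ θ '' S i :=
      himg.out (Set.mem_image_of_mem θ ht₁) (Set.mem_image_of_mem θ ht₂S) ⟨hz1, ht₂z⟩
    obtain ⟨t, htS, rfl⟩ := hz
    exact ⟨t, htS, hz2⟩
  · obtain ⟨z, hz1, hz2⟩ := hg2 (θ t₁)
    obtain ⟨t₂, ht₂z, ht₂S⟩ :=
      ((h.eventually_le_atBot z).and (eventually_of_mem hS fun t ht => ht)).exists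
    have hz : z ∈ θ '' S i :=
      himg.out (Set.mem_image_of_mem θ ht₂S) (Set.mem_image_of_mem θ ht₁) ⟨ht₂z, hz1⟩
    obtain ⟨t, htS, rfl⟩ := hz
    exact ⟨t, htS, hz2⟩

lemma cos_zero_ge (v : ℝ) : ∃ x, v ≤ x ∧ Real.cos x = 0 := by
  refine ⟨(2 * (⌈|v|⌉ : ℝ) + 1) * Real.pi / 2, ?_, Real.cos_eq_zero_iff.mpr ⟨⌈|v|⌉, rfl⟩⟩
  have h1 : (3 : ℝ) < Real.pi := Real.pi_gt_three
  have h2 : |v| ≤ (⌈|v|⌉ : ℝ) := Int.le_ceil _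
  have h3 : (0 : ℝ) ≤ (⌈|v|⌉ : ℝ) := le_trans (abs_nonneg v) h2
  nlinarith [le_abs_self v]

lemma cos_zero_le (v : ℝ) : ∃ x, x ≤ v ∧ Real.cos x = 0 := by
  refine ⟨(2 * ((-⌈|v|⌉ - 1 : ℤ) : ℝ) + 1) * Real.pi / 2, ?_,
    Real.cos_eq_zero_iff.mpr ⟨-⌈|v|⌉ - 1, rfl⟩⟩
  have h1 : (3 : ℝ) < Real.pi := Real.pi_gt_three
  have h2 : |v| ≤ (⌈|v|⌉ : ℝ) := Int.le_ceil _
  have h3 : (0 : ℝ) ≤ (⌈|v|⌉ : ℝ) := le_trans (abs_nonneg v) h2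
  have h4 : ((-⌈|v|⌉ - 1 : ℤ) : ℝ) = -(⌈|v|⌉ : ℝ) - 1 := by push_cast; ring
  rw [h4]
  nlinarith [neg_abs_le v]

lemma sin_zero_ge (v : ℝ) : ∃ x, v ≤ x ∧ Real.sin x = 0 := by
  refine ⟨(⌈|v|⌉ : ℤ) * Real.pi, ?_, Real.sin_int_mul_pi _⟩
  have h1 : (3 : ℝ) < Real.pi := Real.pi_gt_three
  have h2 : |v| ≤ (⌈|v|⌉ : ℝ) := Int.le_ceil _
  have h3 : (0 : ℝ) ≤ (⌈|v|⌉ : ℝ) := le_trans (abs_nonneg v) h2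
  nlinarith [le_abs_self v]

lemma sin_zero_le (v : ℝ) : ∃ x, x ≤ v ∧ Real.sin x = 0 := by
  refine ⟨((-⌈|v|⌉ : ℤ) : ℝ) * Real.pi, ?_, Real.sin_int_mul_pi _⟩
  have h1 : (3 : ℝ) < Real.pi := Real.pi_gt_three
  have h2 : |v| ≤ (⌈|v|⌉ : ℝ) := Int.le_ceil _
  have h3 : (0 : ℝ) ≤ (⌈|v|⌉ : ℝ) := le_trans (abs_nonneg v) h2
  have h4 : ((-⌈|v|⌉ : ℤ) : ℝ) = -(⌈|v|⌉ : ℝ) := by push_cast; ring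
  rw [h4]
  nlinarith [neg_abs_le v]

/- STATEMENT 11: a curve rational in polar coordinates cannot have a limit point
different from the origin: if (a,b) ⊆ Ω with a < b ≤ +∞, θ(t) → ±∞ as t → b⁻, and
P(t) → Q as t → b⁻, then Q = (0,0). -/
theorem limit_point_is_origin
    (A B C D : Polynomial ℝ) (hB : B ≠ 0) (hD : D ≠ 0)
    (hAB : IsCoprime A B) (hCD : IsCoprime C D)
    (a : ℝ) (b : EReal) (hab : (a : EReal) < b)
    (hsub : ∀ t : ℝ, a < t → (t : EReal) < b → B.eval t ≠ 0 ∧ D.eval t ≠ 0)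
    (hθ : Tendsto (ratFun C D) (leftLimitFilter b) atTop ∨
          Tendsto (ratFun C D) (leftLimitFilter b) atBot)
    (Q : ℝ × ℝ)
    (hP : Tendsto (polarCurve A B C D) (leftLimitFilter b) (nhds Q)) :
    Q = (0, 0) := by
  haveI : (leftLimitFilter b).NeBot := llf_neBot hab
  have hbasis := llf_basis hab
  have hconn : ∀ c : ℝ, (a < c ∧ (c : EReal) < b) →
      IsPreconnected {t : ℝ | c < t ∧ (t : EReal) < b} := by
    intro c _
    apply Set.OrdConnected.isPreconnected
    constructor
    intro x hx y hy z hz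
    refine ⟨lt_of_lt_of_le hx.1 hz.1, lt_of_le_of_lt ?_ hy.2⟩
    exact_mod_cast hz.2
  have hθc : ∀ c : ℝ, (a < c ∧ (c : EReal) < b) →
      ContinuousOn (ratFun C D) {t : ℝ | c < t ∧ (t : EReal) < b} := by
    intro c hc t ht
    apply ContinuousAt.continuousWithinAt
    have hDt : D.eval t ≠ 0 := (hsub t (lt_trans hc.1 ht.1) ht.2).2
    exact (Polynomial.continuous C).continuousAt.div
      (Polynomial.continuous D).continuousAt hDt
  have hx : ∃ᶠ t in leftLimitFilter b, Real.cos (ratFun C D t) = 0 :=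
    freq_zero hbasis hconn hθc hθ Real.cos cos_zero_ge cos_zero_le
  have hy : ∃ᶠ t in leftLimitFilter b, Real.sin (ratFun C D t) = 0 :=
    freq_zero hbasis hconn hθc hθ Real.sin sin_zero_ge sin_zero_le
  have hfst : Tendsto (fun t => ratFun A B t * Real.cos (ratFun C D t))
      (leftLimitFilter b) (nhds Q.1) := (continuous_fst.tendsto Q).comp hP
  have hsnd : Tendsto (fun t => ratFun A B t * Real.sin (ratFun C D t))
      (leftLimitFilter b) (nhds Q.2) := (continuous_snd.tendsto Q).comp hP
  have hQ1 : Q.1 = 0 := by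
    have hfreq : ∃ᶠ y in nhds Q.1, y ∈ ({0} : Set ℝ) :=
      hfst.frequently (hx.mono fun t ht => by
        simp only [Set.mem_singleton_iff, ht, mul_zero])
    have := mem_closure_iff_frequently.mpr hfreq
    rwa [closure_singleton, Set.mem_singleton_iff] at this
  have hQ2 : Q.2 = 0 := by
    have hfreq : ∃ᶠ y in nhds Q.2, y ∈ ({0} : Set ℝ) :=
      hsnd.frequently (hy.mono fun t ht => by
        simp only [Set.mem_singleton_iff, ht, mul_zero])
    have := mem_closure_iff_frequently.mpr hfreq
    rwa [closure_singleton, Set.mem_singleton_iff] at this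
  rw [Prod.ext_iff]
  exact ⟨hQ1, hQ2⟩
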